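/- Let H and H' be discretely valued hyperfields whose absolute values take some value other than 0 and 1 and whose norms are positive (equivalently, neither is a field), and let f : H → H' be an isomorphism of hyperfields. Then f preserves the ordering of absolute values: for all x, y ∈ H, |x| ≤ |y| if and only if |f(x)| ≤ |f(y)|. -/

import Mathlib

/-- A (Krasner) valued hyperfield: a hyperfield with a multivalued addition,
single-valued multiplication, an absolute value, the induced distance `dist`,
and the norm `rho`. -/
structure ValuedHyperfield where
  carrier : Type
  add : carrier → carrier → Set carrier
  mul : carrier → carrier → carrier
  zero : carrier
  one : carrier
  neg : carrier → carrier
  abs : carrier → ℝ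
  dist : carrier → carrier → ℝ
  rho : ℝ
  add_comm : ∀ x y, add x y = add y x
  add_assoc : ∀ x y z, (⋃ t ∈ add x y, add t z) = ⋃ t ∈ add y z, add x t
  add_zero : ∀ x, add x zero = {x}
  neg_mem : ∀ x, zero ∈ add x (neg x)
  neg_unique : ∀ x y, zero ∈ add x y → y = neg x
  reverse : ∀ x y z, x ∈ add y (neg z) ↔ y ∈ add x z
  mul_comm : ∀ x y, mul x y = mul y x
  mul_assoc : ∀ x y z, mul (mul x y) z = mul x (mul y z)
  mul_one : ∀ x, mul x one = x
  one_ne_zero : one ≠ zero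
  mul_inv : ∀ x, x ≠ zero → ∃ y, mul x y = one
  distrib : ∀ x y z, (fun t => mul t z) '' add x y ⊆ add (mul x z) (mul y z)
  abs_nonneg : ∀ x, 0 ≤ abs x
  abs_eq_zero_iff : ∀ x, abs x = 0 ↔ x = zero
  abs_mul : ∀ x y, abs (mul x y) = abs x * abs y
  abs_add_le : ∀ x y z, z ∈ add x y → abs z ≤ max (abs x) (abs y)
  abs_add_unique : ∀ x y, zero ∉ add x y →
    ∀ z w, z ∈ add x y → w ∈ add x y → abs z = abs w
  dist_self : ∀ x, dist x x = 0
  dist_eq : ∀ x y z, x ≠ y → z ∈ add x (neg y) → dist x y = abs z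
  rho_nonneg : 0 ≤ rho
  rho_ball : ∀ x y, (∃ w, add x y = {z | dist z w ≤ rho * max (abs x) (abs y)}) ∨
      (∃ w, add x y = {z | dist z w < rho * max (abs x) (abs y)})
  rho_min : ∀ r : ℝ, 0 ≤ r →
      (∀ x y, (∃ w, add x y = {z | dist z w ≤ r * max (abs x) (abs y)}) ∨
        (∃ w, add x y = {z | dist z w < r * max (abs x) (abs y)})) → rho ≤ r

/-- The valuation is discrete: every nonzero value of the absolute value is an
isolated point of the image of the absolute value. -/
def ValuedHyperfield.Discrete (V : ValuedHyperfield) : Prop :=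
  ∀ r ∈ Set.range V.abs, r ≠ 0 →
    ∃ ε > (0 : ℝ), ∀ s ∈ Set.range V.abs, |s - r| < ε → s = r

/-- `θ` is the largest absolute value which is strictly less than 1, attained
at some nonzero element. -/
def ValuedHyperfield.IsTheta (V : ValuedHyperfield) (θ : ℝ) : Prop :=
  (∃ x, x ≠ V.zero ∧ V.abs x = θ) ∧ θ < 1 ∧
    ∀ x, x ≠ V.zero → V.abs x < 1 → V.abs x ≤ θ

/-- An isomorphism of the underlying hyperfields: a multiplicative and additive
bijection (not required to preserve the absolute values). -/
def IsHyperfieldIso (V W : ValuedHyperfield) (f : V.carrier → W.carrier) : Prop :=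
  Function.Bijective f ∧ (∀ x y, f (V.mul x y) = W.mul (f x) (f y)) ∧
    ∀ x y, f '' V.add x y = W.add (f x) (f y)

open Pointwise

namespace ValuedHyperfield

variable (V : ValuedHyperfield)

/-- The sumset `x + (-x)`. -/
def Sset (x : V.carrier) : Set V.carrier := V.add x (V.neg x)

lemma abs_zero' : V.abs V.zero = 0 := (V.abs_eq_zero_iff _).mpr rfl

lemma zero_add' (x : V.carrier) : V.add V.zero x = {x} := by
  rw [V.add_comm]; exact V.add_zero x

lemma neg_zero' : V.neg V.zero = V.zero := by
  have h : V.zero ∈ V.add V.zero V.zero := by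
    rw [V.add_zero]; exact Set.mem_singleton _
  exact (V.neg_unique _ _ h).symm

lemma neg_neg' (x : V.carrier) : V.neg (V.neg x) = x := by
  have h : V.zero ∈ V.add (V.neg x) x := by
    rw [V.add_comm]; exact V.neg_mem x
  exact (V.neg_unique _ _ h).symm

lemma mul_zero' (x : V.carrier) : V.mul x V.zero = V.zero := by
  rw [← V.abs_eq_zero_iff, V.abs_mul, V.abs_zero', mul_zero]

lemma zero_mul' (x : V.carrier) : V.mul V.zero x = V.zero := by
  rw [V.mul_comm]; exact V.mul_zero' x

lemma one_mul' (x : V.carrier) : V.mul V.one x = x := by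
  rw [V.mul_comm]; exact V.mul_one x

lemma abs_one' : V.abs V.one = 1 := by
  have h := V.abs_mul V.one V.one
  rw [V.mul_one] at h
  have h1 : V.abs V.one ≠ 0 := fun hc => V.one_ne_zero ((V.abs_eq_zero_iff _).mp hc)
  have := h.symm
  field_simp at this
  nlinarith [this]

lemma neg_one_mul' (x : V.carrier) : V.mul (V.neg V.one) x = V.neg x := by
  have h0 : V.zero ∈ V.add V.one (V.neg V.one) := V.neg_mem _
  have h1 : V.mul V.zero x ∈ (fun t => V.mul t x) '' V.add V.one (V.neg V.one) :=
    ⟨V.zero, h0, rfl⟩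
  have h2 := V.distrib V.one (V.neg V.one) x h1
  rw [V.zero_mul', V.one_mul'] at h2
  exact V.neg_unique _ _ h2

lemma neg_mul' (a x : V.carrier) : V.mul (V.neg a) x = V.neg (V.mul a x) := by
  rw [← V.neg_one_mul' a, V.mul_assoc, V.neg_one_mul']

lemma abs_neg_one' : V.abs (V.neg V.one) = 1 := by
  have h : V.mul (V.neg V.one) (V.neg V.one) = V.one := by
    rw [V.neg_one_mul', V.neg_neg']
  have h2 := V.abs_mul (V.neg V.one) (V.neg V.one)
  rw [h, V.abs_one'] at h2
  rcases mul_self_eq_one_iff.mp h2.symm with h3 | h3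
  · exact h3
  · nlinarith [V.abs_nonneg (V.neg V.one)]

lemma abs_neg' (x : V.carrier) : V.abs (V.neg x) = V.abs x := by
  rw [← V.neg_one_mul', V.abs_mul, V.abs_neg_one', one_mul]

lemma dist_zero' (z : V.carrier) : V.dist z V.zero = V.abs z := by
  by_cases hz : z = V.zero
  · rw [hz, V.dist_self, V.abs_zero']
  · refine V.dist_eq z V.zero z hz ?_
    rw [V.neg_zero', V.add_zero]; exact Set.mem_singleton _

lemma add_nonempty (hρ : 0 < V.rho) (x y : V.carrier) : (V.add x y).Nonempty := by
  by_cases hx : x = V.zero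
  · rw [hx, V.zero_add']; exact ⟨y, Set.mem_singleton _⟩
  rcases V.rho_ball x y with ⟨w, hw⟩ | ⟨w, hw⟩
  · refine ⟨w, ?_⟩
    rw [hw]
    have : V.dist w w = 0 := V.dist_self w
    simp only [Set.mem_setOf_eq, this]
    have h1 : 0 ≤ max (V.abs x) (V.abs y) := le_max_of_le_left (V.abs_nonneg x)
    positivity
  · refine ⟨w, ?_⟩
    rw [hw]
    simp only [Set.mem_setOf_eq, V.dist_self]
    have h1 : 0 < V.abs x := lt_of_le_of_ne (V.abs_nonneg x)
      fun hc => hx ((V.abs_eq_zero_iff x).mp hc.symm)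
    have h2 : 0 < max (V.abs x) (V.abs y) := lt_max_of_lt_left h1
    positivity

lemma neg_mem_neg (x y v : V.carrier) (hv : v ∈ V.add x (V.neg y)) :
    V.neg v ∈ V.add y (V.neg x) := by
  have h1 : x ∈ V.add v y := (V.reverse v x y).mp hv
  have h2 : x ∈ V.add y (V.neg (V.neg v)) := by rw [V.neg_neg', V.add_comm]; exact h1
  have h3 : y ∈ V.add x (V.neg v) := (V.reverse x y (V.neg v)).mp h2
  have h4 : y ∈ V.add (V.neg v) x := by rw [V.add_comm]; exact h3
  exact (V.reverse (V.neg v) y x).mpr h4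

lemma dist_comm' (hρ : 0 < V.rho) (x y : V.carrier) : V.dist x y = V.dist y x := by
  by_cases hxy : x = y
  · rw [hxy]
  obtain ⟨v, hv⟩ := V.add_nonempty hρ x (V.neg y)
  have h1 := V.dist_eq x y v hxy hv
  have h2 := V.dist_eq y x (V.neg v) (Ne.symm hxy) (V.neg_mem_neg x y v hv)
  rw [h1, h2, V.abs_neg']

lemma dist_nonneg' (hρ : 0 < V.rho) (x y : V.carrier) : 0 ≤ V.dist x y := by
  by_cases hxy : x = y
  · rw [hxy, V.dist_self]
  obtain ⟨v, hv⟩ := V.add_nonempty hρ x (V.neg y)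
  rw [V.dist_eq x y v hxy hv]; exact V.abs_nonneg v

lemma dist_ultra (hρ : 0 < V.rho) (x y z : V.carrier) :
    V.dist x z ≤ max (V.dist x y) (V.dist y z) := by
  by_cases hxz : x = z
  · rw [hxz, V.dist_self]
    exact le_max_of_le_left (V.dist_nonneg' hρ z y)
  by_cases hxy : x = y
  · subst hxy; rw [V.dist_self]
    exact le_max_of_le_right le_rfl
  by_cases hyz : y = z
  · subst hyz; rw [V.dist_self]
    exact le_max_of_le_left le_rfl
  obtain ⟨u, hu⟩ := V.add_nonempty hρ x (V.neg y)
  obtain ⟨v, hv⟩ := V.add_nonempty hρ y (V.neg z)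
  have hxu : x ∈ V.add u y := (V.reverse u x y).mp hu
  have hyv : y ∈ V.add v z := (V.reverse v y z).mp hv
  have hmem : x ∈ ⋃ t ∈ V.add v z, V.add u t :=
    Set.mem_biUnion hyv hxu
  rw [← V.add_assoc] at hmem
  obtain ⟨t, ht, hxt⟩ := Set.mem_iUnion₂.mp hmem
  have htx : t ∈ V.add x (V.neg z) := (V.reverse t x z).mpr hxt
  rw [V.dist_eq x z t hxz htx, V.dist_eq x y u hxy hu, V.dist_eq y z v hyz hv]
  exact V.abs_add_le u v t ht

/-- The sumset `x + (-x)` is a ball around `0` determined by absolute values. -/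
lemma S_eq (hρ : 0 < V.rho) (a : V.carrier) :
    V.Sset a = {z | V.abs z ≤ V.rho * V.abs a} ∨
      V.Sset a = {z | V.abs z < V.rho * V.abs a} := by
  have hmax : max (V.abs a) (V.abs (V.neg a)) = V.abs a := by rw [V.abs_neg', max_self]
  have h0 : V.zero ∈ V.Sset a := V.neg_mem a
  rcases V.rho_ball a (V.neg a) with ⟨w, hw⟩ | ⟨w, hw⟩
  · left
    rw [hmax] at hw
    have h0w : V.dist V.zero w ≤ V.rho * V.abs a := by
      have h0' : V.zero ∈ V.add a (V.neg a) := V.neg_mem a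
      rw [hw] at h0'; exact h0'
    ext z
    rw [Sset, hw]
    simp only [Set.mem_setOf_eq]
    constructor
    · intro hzw
      have := V.dist_ultra hρ z w V.zero
      rw [V.dist_zero'] at this
      have hw0 : V.dist w V.zero ≤ V.rho * V.abs a := by
        rw [V.dist_comm' hρ]; exact h0w
      exact le_trans this (max_le hzw hw0)
    · intro hz
      have := V.dist_ultra hρ z V.zero w
      rw [V.dist_zero'] at this
      exact le_trans this (max_le hz h0w)
  · right
    rw [hmax] at hw
    have h0w : V.dist V.zero w < V.rho * V.abs a := by
      have h0' : V.zero ∈ V.add a (V.neg a) := V.neg_mem a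
      rw [hw] at h0'; exact h0'
    ext z
    rw [Sset, hw]
    simp only [Set.mem_setOf_eq]
    constructor
    · intro hzw
      have := V.dist_ultra hρ z w V.zero
      rw [V.dist_zero'] at this
      have hw0 : V.dist w V.zero < V.rho * V.abs a := by
        rw [V.dist_comm' hρ]; exact h0w
      exact lt_of_le_of_lt this (max_lt hzw hw0)
    · intro hz
      have := V.dist_ultra hρ z V.zero w
      rw [V.dist_zero'] at this
      exact lt_of_le_of_lt this (max_lt hz h0w)

lemma abs_le_rho_of_memS (hρ : 0 < V.rho) {a z : V.carrier} (hz : z ∈ V.Sset a) :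
    V.abs z ≤ V.rho * V.abs a := by
  rcases V.S_eq hρ a with h | h <;> rw [h] at hz
  · exact hz
  · exact le_of_lt hz

lemma memS_of_abs_lt (hρ : 0 < V.rho) {a z : V.carrier}
    (h : V.abs z < V.rho * V.abs a) : z ∈ V.Sset a := by
  rcases V.S_eq hρ a with h1 | h1 <;> rw [h1]
  · exact le_of_lt h
  · exact h

lemma memS_of_abs_le (hρ : 0 < V.rho) {a z z' : V.carrier} (hz : z ∈ V.Sset a)
    (h : V.abs z' ≤ V.abs z) : z' ∈ V.Sset a := by
  rcases V.S_eq hρ a with h1 | h1 <;> rw [h1] at hz ⊢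
  · exact le_trans h hz
  · exact lt_of_le_of_lt h hz

lemma mul_memS {x z : V.carrier} (u : V.carrier) (hz : z ∈ V.Sset x) :
    V.mul z u ∈ V.Sset (V.mul x u) := by
  have h1 : V.mul z u ∈ (fun t => V.mul t u) '' V.add x (V.neg x) := ⟨z, hz, rfl⟩
  have h2 := V.distrib x (V.neg x) u h1
  rw [V.neg_mul'] at h2
  exact h2

lemma memS_iff {x : V.carrier} (hx : x ≠ V.zero) (z : V.carrier) :
    z ∈ V.Sset x ↔ ∃ w ∈ V.Sset V.one, V.mul w x = z := by
  obtain ⟨t, ht⟩ := V.mul_inv x hx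
  constructor
  · intro hz
    refine ⟨V.mul z t, ?_, ?_⟩
    · have := V.mul_memS t hz
      rwa [ht] at this
    · rw [V.mul_assoc, V.mul_comm t x, ht, V.mul_one]
  · rintro ⟨w, hw, rfl⟩
    have := V.mul_memS x hw
    rwa [V.one_mul'] at this

/-- Powers of an element. -/
def wpow (w : V.carrier) : ℕ → V.carrier
  | 0 => V.one
  | n + 1 => V.mul w (wpow w n)

lemma abs_wpow (w : V.carrier) (n : ℕ) : V.abs (V.wpow w n) = (V.abs w) ^ n := by
  induction n with
  | zero => simpa [wpow] using V.abs_one'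
  | succ n ih => rw [wpow, V.abs_mul, ih, pow_succ]; ring

lemma exists_small (hval : ∃ x : V.carrier, V.abs x ≠ 0 ∧ V.abs x ≠ 1)
    (hρ : 0 < V.rho) : ∃ z, z ∈ V.Sset V.one ∧ 0 < V.abs z := by
  obtain ⟨x0, hx0, hx1⟩ := hval
  have hx0pos : 0 < V.abs x0 := lt_of_le_of_ne (V.abs_nonneg x0) (Ne.symm hx0)
  -- find an element `w` with 0 < |w| < 1
  obtain ⟨w, hwpos, hwlt⟩ : ∃ w : V.carrier, 0 < V.abs w ∧ V.abs w < 1 := by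
    rcases lt_or_gt_of_ne hx1 with h | h
    · exact ⟨x0, hx0pos, h⟩
    · have hx0ne : x0 ≠ V.zero := fun hc => hx0 (by rw [hc, V.abs_zero'])
      obtain ⟨t, ht⟩ := V.mul_inv x0 hx0ne
      have habs : V.abs x0 * V.abs t = 1 := by rw [← V.abs_mul, ht, V.abs_one']
      have htpos : 0 < V.abs t := by
        rcases lt_or_eq_of_le (V.abs_nonneg t) with h' | h'
        · exact h'
        · exfalso; rw [← h', mul_zero] at habs; exact _root_.one_ne_zero habs.symm
      refine ⟨t, htpos, ?_⟩
      nlinarith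
  obtain ⟨n, hn⟩ := exists_pow_lt_of_lt_one hρ hwlt
  refine ⟨V.wpow w n, ?_, ?_⟩
  · apply V.memS_of_abs_lt hρ
    rw [V.abs_wpow, V.abs_one', _root_.mul_one]
    exact hn
  · rw [V.abs_wpow]; positivity

lemma S_bddAbove (hρ : 0 < V.rho) (a : V.carrier) : BddAbove (V.abs '' V.Sset a) := by
  refine ⟨V.rho * V.abs a, ?_⟩
  rintro t ⟨z, hz, rfl⟩
  exact V.abs_le_rho_of_memS hρ hz

lemma m_pos (hval : ∃ x : V.carrier, V.abs x ≠ 0 ∧ V.abs x ≠ 1)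
    (hρ : 0 < V.rho) : 0 < sSup (V.abs '' V.Sset V.one) := by
  obtain ⟨z, hz, hzpos⟩ := V.exists_small hval hρ
  exact lt_of_lt_of_le hzpos (le_csSup (V.S_bddAbove hρ V.one) ⟨z, hz, rfl⟩)

lemma absS_scale {x : V.carrier} (hx : x ≠ V.zero) :
    V.abs '' V.Sset x = (V.abs x) • (V.abs '' V.Sset V.one) := by
  ext t
  simp only [Set.mem_smul_set, Set.mem_image, smul_eq_mul]
  constructor
  · rintro ⟨z, hz, rfl⟩
    obtain ⟨w, hw, rfl⟩ := (V.memS_iff hx z).mp hz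
    exact ⟨V.abs w, ⟨w, hw, rfl⟩, by rw [V.abs_mul]; ring⟩
  · rintro ⟨s, ⟨w, hw, rfl⟩, rfl⟩
    refine ⟨V.mul w x, (V.memS_iff hx _).mpr ⟨w, hw, rfl⟩, by rw [V.abs_mul]; ring⟩

lemma m_scale (hρ : 0 < V.rho) {x : V.carrier} (hx : x ≠ V.zero) :
    sSup (V.abs '' V.Sset x) = V.abs x * sSup (V.abs '' V.Sset V.one) := by
  rw [V.absS_scale hx, Real.sSup_smul_of_nonneg (V.abs_nonneg x), smul_eq_mul]

/-- Key comparison lemma: the order of absolute values is encoded by the sumsets. -/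
lemma key (hval : ∃ x : V.carrier, V.abs x ≠ 0 ∧ V.abs x ≠ 1) (hρ : 0 < V.rho)
    {x y : V.carrier} (hx : x ≠ V.zero) (hy : y ≠ V.zero) :
    V.abs x ≤ V.abs y ↔ V.Sset x ⊆ V.Sset y := by
  have mono : ∀ a b : V.carrier, a ≠ V.zero → b ≠ V.zero →
      V.abs a ≤ V.abs b → V.Sset a ⊆ V.Sset b := by
    intro a b ha hb hab z hz
    obtain ⟨ai, hai⟩ := V.mul_inv a ha
    have hapos : 0 < V.abs a := lt_of_le_of_ne (V.abs_nonneg a)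
      fun hc => ha ((V.abs_eq_zero_iff a).mp hc.symm)
    have haai : V.abs a * V.abs ai = 1 := by rw [← V.abs_mul, hai, V.abs_one']
    set u := V.mul ai b with hu
    have hau : V.mul a u = b := by
      rw [hu, ← V.mul_assoc, hai, V.one_mul']
    have huabs : 1 ≤ V.abs u := by
      have h1 : V.abs u = V.abs ai * V.abs b := V.abs_mul ai b
      have h2 : V.abs ai = 1 / V.abs a := by field_simp; linarith [haai]
      rw [h1, h2, one_div, inv_mul_eq_div]
      exact (one_le_div hapos).mpr hab
    have hzu : V.mul z u ∈ V.Sset b := by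
      have := V.mul_memS u hz
      rwa [hau] at this
    apply V.memS_of_abs_le hρ hzu
    rw [V.abs_mul]
    exact le_mul_of_one_le_right (V.abs_nonneg z) huabs
  constructor
  · exact mono x y hx hy
  · intro hsub
    by_contra hlt
    push_neg at hlt
    have hsub2 : V.Sset y ⊆ V.Sset x := mono y x hy hx (le_of_lt hlt)
    have heq : V.Sset x = V.Sset y := Set.Subset.antisymm hsub hsub2
    have h1 : V.abs x * sSup (V.abs '' V.Sset V.one)
        = V.abs y * sSup (V.abs '' V.Sset V.one) := by
      rw [← V.m_scale hρ hx, ← V.m_scale hρ hy, heq]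
    have hm := V.m_pos hval hρ
    have : V.abs x = V.abs y := by
      exact mul_right_cancel₀ (ne_of_gt hm) h1
    linarith

end ValuedHyperfield

section Iso

variable {V W : ValuedHyperfield} {f : V.carrier → W.carrier}

lemma iso_zero (hf : IsHyperfieldIso V W f) : f V.zero = W.zero := by
  have h1 : ∀ a : W.carrier, W.add a (f V.zero) = {a} := by
    intro a
    obtain ⟨x, rfl⟩ := hf.1.2 a
    rw [← hf.2.2, V.add_zero, Set.image_singleton]
  have h2 := h1 W.zero
  have h3 : W.add W.zero (f V.zero) = {f V.zero} := by
    rw [W.add_comm]; exact W.add_zero _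
  rw [h2] at h3
  exact (Set.singleton_eq_singleton_iff.mp h3).symm

lemma iso_neg (hf : IsHyperfieldIso V W f) (x : V.carrier) :
    f (V.neg x) = W.neg (f x) := by
  have h : W.zero ∈ W.add (f x) (f (V.neg x)) := by
    rw [← hf.2.2]
    exact ⟨V.zero, V.neg_mem x, iso_zero hf⟩
  exact W.neg_unique _ _ h

lemma iso_S (hf : IsHyperfieldIso V W f) (x : V.carrier) :
    f '' V.Sset x = W.Sset (f x) := by
  rw [ValuedHyperfield.Sset, ValuedHyperfield.Sset, hf.2.2, iso_neg hf]

lemma iso_ne_zero (hf : IsHyperfieldIso V W f) {x : V.carrier} (hx : x ≠ V.zero) :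
    f x ≠ W.zero := by
  intro hc
  exact hx (hf.1.1 (by rw [hc, iso_zero hf]))

end Iso

theorem stmt13 (V W : ValuedHyperfield)
    (hdiscV : V.Discrete) (hdiscW : W.Discrete)
    (hvalV : ∃ x : V.carrier, V.abs x ≠ 0 ∧ V.abs x ≠ 1)
    (hvalW : ∃ x : W.carrier, W.abs x ≠ 0 ∧ W.abs x ≠ 1)
    (hρV : 0 < V.rho) (hρW : 0 < W.rho)
    (f : V.carrier → W.carrier) (hf : IsHyperfieldIso V W f) :
    ∀ x y : V.carrier, V.abs x ≤ V.abs y ↔ W.abs (f x) ≤ W.abs (f y) := by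
  intro x y
  by_cases hx : x = V.zero
  · subst hx
    rw [V.abs_zero', iso_zero hf, W.abs_zero']
    simp [V.abs_nonneg y, W.abs_nonneg (f y)]
  by_cases hy : y = V.zero
  · subst hy
    rw [V.abs_zero', iso_zero hf, W.abs_zero']
    have h1 : ¬ V.abs x ≤ 0 := by
      intro hc
      exact hx ((V.abs_eq_zero_iff x).mp (le_antisymm hc (V.abs_nonneg x)))
    have h2 : ¬ W.abs (f x) ≤ 0 := by
      intro hc
      exact iso_ne_zero hf hx ((W.abs_eq_zero_iff (f x)).mp
        (le_antisymm hc (W.abs_nonneg (f x))))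
    simp [h1, h2]
  · rw [V.key hvalV hρV hx hy,
      W.key hvalW hρW (iso_ne_zero hf hx) (iso_ne_zero hf hy),
      ← iso_S hf x, ← iso_S hf y]
    exact (Set.image_subset_image_iff hf.1.1).symm
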